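/- Let N ≥ 1, let A = (A_{ij}) and B = (B_{ij}) be N × N real symmetric matrices with ordered eigenvalues λ₁(A) ≤ ⋯ ≤ λ_N(A) and λ₁(B) ≤ ⋯ ≤ λ_N(B), and let f ∈ C¹(ℝ) have bounded derivative. Then |(1/N) Σ_{i=1}^N ( f(λ_i(A)) − f(λ_i(B)) )|² ≤ (1/N) ‖f′‖_∞² Σ_{i,j=1}^N (A_{ij} − B_{ij})²; equivalently, |⟨f, μ_A⟩ − ⟨f, μ_B⟩| ≤ ‖f′‖_∞ N^{−1/2} ‖A − B‖_F. -/

import Mathlib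

open scoped BigOperators Matrix

open Matrix Finset

namespace HWaux

variable {N : ℕ}

lemma sum_sq_expand (a c : Fin N → ℝ) :
    ∑ i, (a i - c i) ^ 2 = ∑ i, (a i) ^ 2 + ∑ i, (c i) ^ 2 - 2 * ∑ i, a i * c i := by
  have h : ∀ i : Fin N, (a i - c i) ^ 2 = a i ^ 2 + c i ^ 2 - 2 * (a i * c i) :=
    fun i => by ring
  simp_rw [h]
  rw [Finset.sum_sub_distrib, Finset.sum_add_distrib, Finset.mul_sum]

lemma rearrange (a b : Fin N → ℝ) (ha : Monotone a) (hb : Monotone b)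
    (σ : Equiv.Perm (Fin N)) :
    ∑ i, (a i - b i) ^ 2 ≤ ∑ i, (a i - b (σ i)) ^ 2 := by
  have h1 : ∑ i, (b (σ i)) ^ 2 = ∑ i, (b i) ^ 2 := Equiv.sum_comp σ fun i => (b i) ^ 2
  have h2 : ∑ i, a i * b (σ i) ≤ ∑ i, a i * b i := by
    simpa [smul_eq_mul] using (ha.monovary hb).sum_smul_comp_perm_le_sum_smul (σ := σ)
  rw [sum_sq_expand, sum_sq_expand, h1]
  linarith

lemma perm_conj (σ : Equiv.Perm (Fin N)) (d : Fin N → ℝ) :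
    σ.permMatrix ℝ * diagonal d * star (σ.permMatrix ℝ) = diagonal (d ∘ σ) := by
  ext i k
  simp only [Matrix.mul_apply, PEquiv.toMatrix_apply, Equiv.toPEquiv_apply,
    Matrix.diagonal_apply, Matrix.star_apply, star_trivial]
  simp [Finset.sum_ite_eq, eq_comm, Function.comp]
  split <;> simp_all

lemma perm_mul_star (σ : Equiv.Perm (Fin N)) :
    σ.permMatrix ℝ * star (σ.permMatrix ℝ) = 1 := by
  have := perm_conj σ (fun _ => (1 : ℝ))
  simpa [Matrix.diagonal_one, Function.comp_def] using this

lemma frob_eq_trace (M : Matrix (Fin N) (Fin N) ℝ) :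
    ∑ i, ∑ j, (M i j) ^ 2 = Matrix.trace (M * star M) := by
  simp [Matrix.trace, Matrix.mul_apply, Matrix.diag, Matrix.star_apply, sq]

lemma trace_conj_sq (U : Matrix (Fin N) (Fin N) ℝ) (hU' : star U * U = 1)
    (a : Fin N → ℝ) :
    Matrix.trace (U * diagonal a * star U * (U * diagonal a * star U))
      = ∑ i, (a i) ^ 2 := by
  have h1 : U * diagonal a * star U * (U * diagonal a * star U)
      = U * (diagonal a * diagonal a) * star U := by
    calc U * diagonal a * star U * (U * diagonal a * star U)
        = U * (diagonal a * ((star U * U) * (diagonal a * star U))) := by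
          simp only [Matrix.mul_assoc]
      _ = U * (diagonal a * diagonal a) * star U := by
          rw [hU', Matrix.one_mul]; simp only [Matrix.mul_assoc]
  rw [h1, Matrix.diagonal_mul_diagonal, Matrix.trace_mul_comm,
    ← Matrix.mul_assoc, hU', Matrix.one_mul, Matrix.trace_diagonal]
  simp [sq]

lemma trace_cross (U V : Matrix (Fin N) (Fin N) ℝ) (a b : Fin N → ℝ) :
    Matrix.trace (U * diagonal a * star U * (V * diagonal b * star V))
      = ∑ i, ∑ j, a i * b j * ((star U * V) i j) ^ 2 := by
  have hsVU : star V * U = star (star U * V) := by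
    rw [Matrix.star_mul, star_star]
  calc Matrix.trace (U * diagonal a * star U * (V * diagonal b * star V))
      = Matrix.trace (U * (diagonal a * (star U * (V * (diagonal b * star V))))) := by
        simp only [Matrix.mul_assoc]
    _ = Matrix.trace ((diagonal a * (star U * (V * (diagonal b * star V)))) * U) :=
        Matrix.trace_mul_comm _ _
    _ = Matrix.trace (diagonal a * ((star U * V) * (diagonal b * (star V * U)))) := by
        simp only [Matrix.mul_assoc]
    _ = Matrix.trace (diagonal a * ((star U * V) * (diagonal b * star (star U * V)))) := by
        rw [hsVU]
    _ = ∑ i, ∑ j, a i * b j * ((star U * V) i j) ^ 2 := by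
        rw [Matrix.trace]
        refine Finset.sum_congr rfl fun i _ => ?_
        rw [Matrix.diag_apply, Matrix.diagonal_mul, Matrix.mul_apply, Finset.mul_sum]
        refine Finset.sum_congr rfl fun j _ => ?_
        rw [Matrix.diagonal_mul, Matrix.star_apply]
        simp only [star_trivial]
        ring

end HWaux

namespace HWaux2
open HWaux

variable {N : ℕ}

lemma hoffman_wielandt (a b : Fin N → ℝ) (ha : Monotone a) (hb : Monotone b)
    (U V : Matrix (Fin N) (Fin N) ℝ)
    (hU : U * star U = 1) (hU' : star U * U = 1)
    (hV : V * star V = 1) (hV' : star V * V = 1) :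
    ∑ i, (a i - b i) ^ 2
      ≤ ∑ i, ∑ j, ((U * diagonal a * star U - V * diagonal b * star V) i j) ^ 2 := by
  set X := U * diagonal a * star U with hX
  set Y := V * diagonal b * star V with hY
  set W := star U * V with hWdef
  -- W is "unitary"
  have hsW : star W = star V * U := by rw [hWdef, Matrix.star_mul, star_star]
  have hWW : W * star W = 1 := by
    rw [hWdef, hsW]
    calc star U * V * (star V * U) = star U * ((V * star V) * U) := by
          simp only [Matrix.mul_assoc]
      _ = 1 := by rw [hV, Matrix.one_mul, hU']
  have hWW' : star W * W = 1 := by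
    rw [hWdef, hsW]
    calc star V * U * (star U * V) = star V * ((U * star U) * V) := by
          simp only [Matrix.mul_assoc]
      _ = 1 := by rw [hU, Matrix.one_mul, hV']
  have hrow : ∀ i, ∑ j, (W i j) ^ 2 = 1 := by
    intro i
    have h := congrFun (congrFun hWW i) i
    simpa [Matrix.mul_apply, Matrix.star_apply, Matrix.one_apply_eq, sq] using h
  have hcol : ∀ j, ∑ i, (W i j) ^ 2 = 1 := by
    intro j
    have h := congrFun (congrFun hWW' j) j
    simpa [Matrix.mul_apply, Matrix.star_apply, Matrix.one_apply_eq, sq, mul_comm] using h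
  -- X - Y is symmetric
  have hXs : star X = X := by
    rw [hX, Matrix.star_mul, Matrix.star_mul, star_star]
    have : star (diagonal a) = diagonal a := by
      rw [Matrix.star_eq_conjTranspose, Matrix.diagonal_conjTranspose]
      simp
    rw [this, Matrix.mul_assoc]
  have hYs : star Y = Y := by
    rw [hY, Matrix.star_mul, Matrix.star_mul, star_star]
    have : star (diagonal b) = diagonal b := by
      rw [Matrix.star_eq_conjTranspose, Matrix.diagonal_conjTranspose]
      simp
    rw [this, Matrix.mul_assoc]
  have hMs : star (X - Y) = X - Y := by rw [star_sub, hXs, hYs]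
  -- trace identities
  have hXX : Matrix.trace (X * X) = ∑ i, (a i) ^ 2 := trace_conj_sq U hU' a
  have hYY : Matrix.trace (Y * Y) = ∑ i, (b i) ^ 2 := trace_conj_sq V hV' b
  have hXY : Matrix.trace (X * Y) = ∑ i, ∑ j, a i * b j * (W i j) ^ 2 :=
    trace_cross U V a b
  have hfrob : ∑ i, ∑ j, ((X - Y) i j) ^ 2
      = ∑ i, (a i) ^ 2 + ∑ i, (b i) ^ 2 - 2 * ∑ i, ∑ j, a i * b j * (W i j) ^ 2 := by
    rw [frob_eq_trace, hMs]
    have : (X - Y) * (X - Y) = X * X - X * Y - (Y * X - Y * Y) := by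
      rw [Matrix.sub_mul, Matrix.mul_sub, Matrix.mul_sub]
    rw [this, Matrix.trace_sub, Matrix.trace_sub, Matrix.trace_sub,
      Matrix.trace_mul_comm Y X, hXX, hYY, hXY]
    ring
  -- the doubly stochastic matrix
  have hkey : ∑ i, ∑ j, (W i j) ^ 2 * (a i - b j) ^ 2
      = ∑ i, ∑ j, ((X - Y) i j) ^ 2 := by
    have hterm : ∀ i j : Fin N, (W i j) ^ 2 * (a i - b j) ^ 2
        = (a i) ^ 2 * (W i j) ^ 2 + (b j) ^ 2 * (W i j) ^ 2
          - 2 * (a i * b j * (W i j) ^ 2) := fun i j => by ring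
    have e1 : ∑ i, ∑ j, (a i) ^ 2 * (W i j) ^ 2 = ∑ i, (a i) ^ 2 := by
      refine Finset.sum_congr rfl fun i _ => ?_
      rw [← Finset.mul_sum, hrow i, mul_one]
    have e2 : ∑ i, ∑ j, (b j) ^ 2 * (W i j) ^ 2 = ∑ i, (b i) ^ 2 := by
      rw [Finset.sum_comm]
      refine Finset.sum_congr rfl fun j _ => ?_
      rw [← Finset.mul_sum, hcol j, mul_one]
    have e3 : ∑ i, ∑ j, 2 * (a i * b j * (W i j) ^ 2)
        = 2 * ∑ i, ∑ j, a i * b j * (W i j) ^ 2 := by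
      simp_rw [← Finset.mul_sum]
    simp_rw [hterm, Finset.sum_sub_distrib, Finset.sum_add_distrib]
    rw [e1, e2, e3, hfrob]
  -- Birkhoff
  have hS : Matrix.of (fun i j => (W i j) ^ 2) ∈ doublyStochastic ℝ (Fin N) := by
    rw [mem_doublyStochastic_iff_sum]
    exact ⟨fun i j => sq_nonneg _, hrow, hcol⟩
  obtain ⟨w, hw0, hw1, hweq⟩ := exists_eq_sum_perm_of_mem_doublyStochastic hS
  have hSentry : ∀ i j, (W i j) ^ 2 = ∑ σ : Equiv.Perm (Fin N), w σ * (σ.permMatrix ℝ) i j := by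
    intro i j
    have h := congrFun (congrFun hweq i) j
    simpa [Finset.sum_apply, Matrix.sum_apply, Matrix.smul_apply, smul_eq_mul] using h.symm
  have hperm : ∀ σ : Equiv.Perm (Fin N),
      ∑ i, ∑ j, (σ.permMatrix ℝ) i j * (a i - b j) ^ 2 = ∑ i, (a i - b (σ i)) ^ 2 := by
    intro σ
    refine Finset.sum_congr rfl fun i _ => ?_
    simp [PEquiv.toMatrix_apply, Equiv.toPEquiv_apply, ite_mul, Finset.sum_ite_eq]
  have hdecomp : ∑ i, ∑ j, (W i j) ^ 2 * (a i - b j) ^ 2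
      = ∑ σ : Equiv.Perm (Fin N), w σ * ∑ i, (a i - b (σ i)) ^ 2 := by
    simp_rw [hSentry, Finset.sum_mul, mul_assoc]
    calc ∑ i, ∑ j, ∑ σ : Equiv.Perm (Fin N), w σ * ((σ.permMatrix ℝ) i j * (a i - b j) ^ 2)
        = ∑ i, ∑ σ : Equiv.Perm (Fin N), ∑ j, w σ * ((σ.permMatrix ℝ) i j * (a i - b j) ^ 2) :=
          Finset.sum_congr rfl fun i _ => Finset.sum_comm
      _ = ∑ σ : Equiv.Perm (Fin N), ∑ i, ∑ j, w σ * ((σ.permMatrix ℝ) i j * (a i - b j) ^ 2) :=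
          Finset.sum_comm
      _ = ∑ σ : Equiv.Perm (Fin N), w σ * ∑ i, (a i - b (σ i)) ^ 2 := by
          refine Finset.sum_congr rfl fun σ _ => ?_
          rw [← hperm σ, Finset.mul_sum]
          exact Finset.sum_congr rfl fun i _ => (Finset.mul_sum _ _ _).symm
  have hlow : ∑ i, (a i - b i) ^ 2
      ≤ ∑ σ : Equiv.Perm (Fin N), w σ * ∑ i, (a i - b (σ i)) ^ 2 := by
    calc ∑ i, (a i - b i) ^ 2 = ∑ σ : Equiv.Perm (Fin N), w σ * ∑ i, (a i - b i) ^ 2 := by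
          rw [← Finset.sum_mul, hw1, one_mul]
      _ ≤ _ := by
          refine Finset.sum_le_sum fun σ _ => ?_
          exact mul_le_mul_of_nonneg_left (rearrange a b ha hb σ) (hw0 σ)
  calc ∑ i, (a i - b i) ^ 2 ≤ ∑ σ : Equiv.Perm (Fin N), w σ * ∑ i, (a i - b (σ i)) ^ 2 := hlow
    _ = ∑ i, ∑ j, (W i j) ^ 2 * (a i - b j) ^ 2 := hdecomp.symm
    _ = ∑ i, ∑ j, ((X - Y) i j) ^ 2 := hkey

end HWaux2


open HWaux HWaux2 in
/-- **Hoffman–Wielandt-type estimate for spectral linear statistics** (cf. eq. (4.4)):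
for real symmetric `N × N` matrices `A`, `B` with ordered eigenvalues `λ₁ ≤ ⋯ ≤ λ_N`
(formalized as monotone enumerations `lA`, `lB` obtained from the eigenvalues by
permutations) and a `C¹` function `f` whose derivative is bounded by `L`,
`|(1/N) Σᵢ (f(λᵢ(A)) − f(λᵢ(B)))|² ≤ (1/N) L² Σᵢⱼ (Aᵢⱼ − Bᵢⱼ)²`. -/
theorem sq_abs_avg_spectral_statistic_sub_le
    (N : ℕ) (hN : 1 ≤ N)
    (A B : Matrix (Fin N) (Fin N) ℝ) (hA : A.IsHermitian) (hB : B.IsHermitian)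
    (lA lB : Fin N → ℝ) (hlAmono : Monotone lA) (hlBmono : Monotone lB)
    (σA σB : Equiv.Perm (Fin N))
    (hlA : lA = hA.eigenvalues ∘ σA) (hlB : lB = hB.eigenvalues ∘ σB)
    (f : ℝ → ℝ) (hf : ContDiff ℝ 1 f) (L : ℝ) (hL : ∀ x, |deriv f x| ≤ L) :
    |(1 / (N : ℝ)) * ∑ i, (f (lA i) - f (lB i))| ^ 2
      ≤ (1 / (N : ℝ)) * L ^ 2 * ∑ i, ∑ j, (A i j - B i j) ^ 2 := by
  have hL0 : (0 : ℝ) ≤ L := le_trans (abs_nonneg _) (hL 0)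
  have hLip : ∀ x y : ℝ, |f x - f y| ≤ L * |x - y| := by
    intro x y
    have := Convex.norm_image_sub_le_of_norm_deriv_le
      (fun z (_ : z ∈ (Set.univ : Set ℝ)) => (hf.differentiable one_ne_zero).differentiableAt)
      (fun z _ => by simpa [Real.norm_eq_abs] using hL z)
      convex_univ (Set.mem_univ y) (Set.mem_univ x)
    simpa [Real.norm_eq_abs] using this
  -- spectral decompositions adapted to the sorted eigenvalues
  set Uu := (hA.eigenvectorUnitary : Matrix (Fin N) (Fin N) ℝ) with hUu
  set Vv := (hB.eigenvectorUnitary : Matrix (Fin N) (Fin N) ℝ) with hVv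
  set P := (σA⁻¹).permMatrix ℝ with hP
  set Q := (σB⁻¹).permMatrix ℝ with hQ
  have hUu1 : Uu * star Uu = 1 := Matrix.mem_unitaryGroup_iff.mp hA.eigenvectorUnitary.2
  have hUu2 : star Uu * Uu = 1 := Matrix.mem_unitaryGroup_iff'.mp hA.eigenvectorUnitary.2
  have hVv1 : Vv * star Vv = 1 := Matrix.mem_unitaryGroup_iff.mp hB.eigenvectorUnitary.2
  have hVv2 : star Vv * Vv = 1 := Matrix.mem_unitaryGroup_iff'.mp hB.eigenvectorUnitary.2
  have hP1 : P * star P = 1 := perm_mul_star _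
  have hP2 : star P * P = 1 := mul_eq_one_comm.mp hP1
  have hQ1 : Q * star Q = 1 := perm_mul_star _
  have hQ2 : star Q * Q = 1 := mul_eq_one_comm.mp hQ1
  set U := Uu * P with hUdef
  set V := Vv * Q with hVdef
  have hU1 : U * star U = 1 := by
    rw [hUdef, Matrix.star_mul]
    calc Uu * P * (star P * star Uu) = Uu * ((P * star P) * star Uu) := by
          simp only [Matrix.mul_assoc]
      _ = 1 := by rw [hP1, Matrix.one_mul, hUu1]
  have hU2 : star U * U = 1 := by
    rw [hUdef, Matrix.star_mul]
    calc star P * star Uu * (Uu * P) = star P * ((star Uu * Uu) * P) := by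
          simp only [Matrix.mul_assoc]
      _ = 1 := by rw [hUu2, Matrix.one_mul, hP2]
  have hV1 : V * star V = 1 := by
    rw [hVdef, Matrix.star_mul]
    calc Vv * Q * (star Q * star Vv) = Vv * ((Q * star Q) * star Vv) := by
          simp only [Matrix.mul_assoc]
      _ = 1 := by rw [hQ1, Matrix.one_mul, hVv1]
  have hV2 : star V * V = 1 := by
    rw [hVdef, Matrix.star_mul]
    calc star Q * star Vv * (Vv * Q) = star Q * ((star Vv * Vv) * Q) := by
          simp only [Matrix.mul_assoc]
      _ = 1 := by rw [hVv2, Matrix.one_mul, hQ2]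
  have hAeq : A = U * diagonal lA * star U := by
    have hcomp : lA ∘ (σA⁻¹ : Equiv.Perm (Fin N)) = hA.eigenvalues := by
      funext i; rw [hlA]; simp
    calc A = Uu * diagonal hA.eigenvalues * star Uu := by
          simpa using hA.spectral_theorem
      _ = Uu * (P * diagonal lA * star P) * star Uu := by
          rw [hP, perm_conj, hcomp]
      _ = U * diagonal lA * star U := by
          rw [hUdef, Matrix.star_mul]; simp only [Matrix.mul_assoc]
  have hBeq : B = V * diagonal lB * star V := by
    have hcomp : lB ∘ (σB⁻¹ : Equiv.Perm (Fin N)) = hB.eigenvalues := by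
      funext i; rw [hlB]; simp
    calc B = Vv * diagonal hB.eigenvalues * star Vv := by
          simpa using hB.spectral_theorem
      _ = Vv * (Q * diagonal lB * star Q) * star Vv := by
          rw [hQ, perm_conj, hcomp]
      _ = V * diagonal lB * star V := by
          rw [hVdef, Matrix.star_mul]; simp only [Matrix.mul_assoc]
  have hHW : ∑ i, (lA i - lB i) ^ 2 ≤ ∑ i, ∑ j, (A i j - B i j) ^ 2 := by
    have h := hoffman_wielandt lA lB hlAmono hlBmono U V hU1 hU2 hV1 hV2
    simpa [← hAeq, ← hBeq, Matrix.sub_apply] using h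
  -- analytic estimates
  have hsq : ∀ i, (f (lA i) - f (lB i)) ^ 2 ≤ L ^ 2 * (lA i - lB i) ^ 2 := by
    intro i
    calc (f (lA i) - f (lB i)) ^ 2 = |f (lA i) - f (lB i)| ^ 2 := (sq_abs _).symm
      _ ≤ (L * |lA i - lB i|) ^ 2 :=
          pow_le_pow_left₀ (abs_nonneg _) (hLip (lA i) (lB i)) 2
      _ = L ^ 2 * (lA i - lB i) ^ 2 := by rw [mul_pow, sq_abs]
  have hCS : (∑ i, (f (lA i) - f (lB i))) ^ 2
      ≤ (N : ℝ) * ∑ i, (f (lA i) - f (lB i)) ^ 2 := by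
    simpa [Finset.card_univ] using
      sq_sum_le_card_mul_sum_sq (s := (Finset.univ : Finset (Fin N)))
        (f := fun i => f (lA i) - f (lB i))
  have hNpos : (0 : ℝ) < N := by exact_mod_cast hN
  calc |(1 / (N : ℝ)) * ∑ i, (f (lA i) - f (lB i))| ^ 2
      = (1 / (N : ℝ)) ^ 2 * (∑ i, (f (lA i) - f (lB i))) ^ 2 := by
        rw [← abs_pow, abs_of_nonneg (by positivity), mul_pow]
    _ ≤ (1 / (N : ℝ)) ^ 2 * ((N : ℝ) * ∑ i, (f (lA i) - f (lB i)) ^ 2) :=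
        mul_le_mul_of_nonneg_left hCS (by positivity)
    _ ≤ (1 / (N : ℝ)) ^ 2 * ((N : ℝ) * (L ^ 2 * ∑ i, (lA i - lB i) ^ 2)) := by
        have h1 : ∑ i, (f (lA i) - f (lB i)) ^ 2 ≤ L ^ 2 * ∑ i, (lA i - lB i) ^ 2 := by
          rw [Finset.mul_sum]
          exact Finset.sum_le_sum fun i _ => hsq i
        have h2 := mul_le_mul_of_nonneg_left h1 hNpos.le
        exact mul_le_mul_of_nonneg_left h2 (by positivity)
    _ ≤ (1 / (N : ℝ)) ^ 2 * ((N : ℝ) * (L ^ 2 * ∑ i, ∑ j, (A i j - B i j) ^ 2)) := by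
        have h2 := mul_le_mul_of_nonneg_left
          (mul_le_mul_of_nonneg_left hHW (by positivity : (0:ℝ) ≤ L ^ 2)) hNpos.le
        exact mul_le_mul_of_nonneg_left h2 (by positivity)
    _ = (1 / (N : ℝ)) * L ^ 2 * ∑ i, ∑ j, (A i j - B i j) ^ 2 := by
        field_simp
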